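/- Let 1 < M ≤ d+1 and τ > 0. Define the mini-batch InfoNCE loss L(U,V) = (1/M) Σ_{i=1}^M −log( exp(u_i·v_i/τ) / Σ_{j=1}^M exp(u_i·v_j/τ) ) for M-tuples U, V of unit vectors in ℝ^d, and its symmetric version L_sym(U,V) = ½(L(U,V) + L(V,U)). Then L_sym is minimized over all such (U,V) exactly at the configurations with u_i = v_i for all i and ⟨u_i, u_j⟩ = −1/(M−1) for all i ≠ j; these are the unique minimizers. -/

import Mathlib

open scoped BigOperators RealInnerProductSpace

noncomputable section

set_option maxHeartbeats 1000000

open Finset Module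

/-- Mini-batch InfoNCE loss with temperature `τ`. -/
def Lnce (d M : ℕ) (τ : ℝ)
    (U V : Fin M → EuclideanSpace ℝ (Fin d)) : ℝ :=
  (1 / (M : ℝ)) * ∑ i, -Real.log
    (Real.exp (⟪U i, V i⟫ / τ) / ∑ j, Real.exp (⟪U i, V j⟫ / τ))

/-- Symmetrised InfoNCE loss. -/
def LnceSym (d M : ℕ) (τ : ℝ)
    (U V : Fin M → EuclideanSpace ℝ (Fin d)) : ℝ :=
  (Lnce d M τ U V + Lnce d M τ V U) / 2


lemma exists_isometry_of_finrank_le (E : Type*) [NormedAddCommGroup E]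
    [InnerProductSpace ℝ E] [FiniteDimensional ℝ E] (d : ℕ)
    (h : Module.finrank ℝ E ≤ d) :
    Nonempty (E →ₗᵢ[ℝ] EuclideanSpace ℝ (Fin d)) := by
  classical
  let b := stdOrthonormalBasis ℝ E
  let v : Fin (Module.finrank ℝ E) → EuclideanSpace ℝ (Fin d) :=
    (EuclideanSpace.basisFun (Fin d) ℝ) ∘ (Fin.castLE h)
  have hv : Orthonormal ℝ v :=
    (EuclideanSpace.basisFun (Fin d) ℝ).orthonormal.comp _ (Fin.castLE_injective h)
  obtain ⟨f, hfb⟩ : ∃ f : E →ₗ[ℝ] EuclideanSpace ℝ (Fin d),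
      ∀ k, f (b.toBasis k) = v k :=
    ⟨b.toBasis.constr ℝ v, fun k => b.toBasis.constr_basis ℝ v k⟩
  have hfv : Orthonormal ℝ (⇑f ∘ ⇑b.toBasis) := by
    have : ⇑f ∘ ⇑b.toBasis = v := funext fun k => hfb k
    rw [this]; exact hv
  exact ⟨f.isometryOfOrthonormal b.orthonormal hfv⟩

lemma simplex_exists (d M : ℕ) (hM : 1 < M) (hMd : M ≤ d + 1) :
    ∃ W : Fin M → EuclideanSpace ℝ (Fin d),
      (∀ i, ‖W i‖ = 1) ∧ ∀ i j, i ≠ j → ⟪W i, W j⟫ = -1 / ((M : ℝ) - 1) := by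
  classical
  have hM0 : (0:ℝ) < M := by positivity
  have hM1 : (1:ℝ) < M := by exact_mod_cast hM
  -- the all-ones vector in ℝ^M
  set ones : EuclideanSpace ℝ (Fin M) := WithLp.toLp 2 (fun _ => (1:ℝ)) with hones
  have hones0 : ones ≠ 0 := by
    intro h
    have := congrArg (fun v : EuclideanSpace ℝ (Fin M) => v ⟨0, by omega⟩) h
    simpa [hones] using this
  -- x i = e_i - (1/M) ones, orthogonal to ones
  set x : Fin M → EuclideanSpace ℝ (Fin M) :=
    fun i => EuclideanSpace.single i (1:ℝ) - ((M:ℝ))⁻¹ • ones with hx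
  have hinner_ones : ∀ i, ⟪ones, x i⟫ = 0 := by
    intro i
    simp only [hx, inner_sub_right, inner_smul_right]
    rw [show ⟪ones, EuclideanSpace.single i (1:ℝ)⟫ = 1 by
      simp [EuclideanSpace.inner_single_right, hones]]
    rw [show ⟪ones, ones⟫ = (M:ℝ) by
      rw [hones, PiLp.inner_apply]; simp]
    field_simp
    ring
  have hinner_x : ∀ i j, ⟪x i, x j⟫ = (if i = j then (1:ℝ) else 0) - (M:ℝ)⁻¹ := by
    intro i j
    have h1 : ⟪EuclideanSpace.single i (1:ℝ), EuclideanSpace.single j (1:ℝ)⟫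
        = (if i = j then (1:ℝ) else 0) := by
      simp [EuclideanSpace.inner_single_left, EuclideanSpace.single_apply, eq_comm]
    simp only [hx, inner_sub_left, inner_sub_right, inner_smul_left, inner_smul_right,
      conj_trivial]
    rw [h1]
    rw [show ⟪EuclideanSpace.single i (1:ℝ), ones⟫ = 1 by
      simp [EuclideanSpace.inner_single_left, hones]]
    rw [show ⟪ones, EuclideanSpace.single j (1:ℝ)⟫ = 1 by
      simp [EuclideanSpace.inner_single_right, hones]]
    rw [show ⟪ones, ones⟫ = (M:ℝ) by rw [hones, PiLp.inner_apply]; simp]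
    field_simp
    ring
  -- hyperplane
  set Wsub := (Submodule.span ℝ {ones})ᗮ with hWsub
  haveI : Fact (finrank ℝ (EuclideanSpace ℝ (Fin M)) = (M - 1) + 1) :=
    ⟨by simp [finrank_euclideanSpace]; omega⟩
  have hdim : finrank ℝ Wsub = M - 1 := Submodule.finrank_orthogonal_span_singleton hones0
  have hxmem : ∀ i, x i ∈ Wsub := by
    intro i
    rw [hWsub, Submodule.mem_orthogonal]
    intro u hu
    rcases Submodule.mem_span_singleton.mp hu with ⟨c, rfl⟩
    rw [inner_smul_left]
    simp [hinner_ones i]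
  have hcard : finrank ℝ Wsub ≤ d := by omega
  obtain ⟨T⟩ := exists_isometry_of_finrank_le Wsub d hcard
  -- normalization constant
  have hnx : ∀ i, ⟪x i, x i⟫ = 1 - (M:ℝ)⁻¹ := by intro i; rw [hinner_x]; simp
  set r : ℝ := (1 - (M:ℝ)⁻¹)⁻¹ with hr
  have h1M : (0:ℝ) < 1 - (M:ℝ)⁻¹ := by
    have : (M:ℝ)⁻¹ < 1 := by
      rw [inv_lt_one_iff₀]; right; exact hM1
    linarith
  refine ⟨fun i => T ⟨Real.sqrt r • x i, Submodule.smul_mem _ _ (hxmem i)⟩, ?_, ?_⟩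
  · intro i
    have key : ‖T ⟨Real.sqrt r • x i, Submodule.smul_mem _ _ (hxmem i)⟩‖^2 = 1 := by
      rw [← real_inner_self_eq_norm_sq, LinearIsometry.inner_map_map]
      have : ⟪(⟨Real.sqrt r • x i, Submodule.smul_mem _ _ (hxmem i)⟩ : Wsub),
          (⟨Real.sqrt r • x i, Submodule.smul_mem _ _ (hxmem i)⟩ : Wsub)⟫
          = Real.sqrt r * Real.sqrt r * ⟪x i, x i⟫ := by
        rw [Submodule.coe_inner, real_inner_smul_left, real_inner_smul_right]
        ring
      rw [this, Real.mul_self_sqrt (by positivity), hnx, hr]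
      exact inv_mul_cancel₀ h1M.ne'
    rw [← Real.sqrt_sq (norm_nonneg _), key, Real.sqrt_one]
  · intro i j hij
    rw [LinearIsometry.inner_map_map]
    have : ⟪(⟨Real.sqrt r • x i, Submodule.smul_mem _ _ (hxmem i)⟩ : Wsub),
        (⟨Real.sqrt r • x j, Submodule.smul_mem _ _ (hxmem j)⟩ : Wsub)⟫
        = Real.sqrt r * Real.sqrt r * ⟪x i, x j⟫ := by
      rw [Submodule.coe_inner, real_inner_smul_left, real_inner_smul_right]
      ring
    rw [this, Real.mul_self_sqrt (by positivity), hinner_x, if_neg hij, hr]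
    have hM1' : (M:ℝ) - 1 ≠ 0 := by linarith
    field_simp
    ring



lemma exp_jensen_le {ι : Type*} [DecidableEq ι] (s : Finset ι) (lam : ℝ) (hl : 0 < lam)
    (hnl : lam * s.card < 1) (δ : ι → ℝ) :
    Real.exp (lam * ∑ j ∈ s, δ j) ≤ (1 - lam * s.card) + lam * ∑ j ∈ s, Real.exp (δ j) := by
  classical
  set w : Option ι → ℝ := fun o => Option.elim o (1 - lam * s.card) (fun _ => lam) with hw
  set p : Option ι → ℝ := fun o => Option.elim o 0 δ with hp
  have h₀ : ∀ o ∈ Finset.insertNone s, 0 ≤ w o := by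
    rintro (_|j) _ <;> simp [hw] <;> linarith
  have h₁ : ∑ o ∈ Finset.insertNone s, w o = 1 := by
    rw [Finset.sum_insertNone]
    simp [hw, mul_comm]
  have hmem : ∀ o ∈ Finset.insertNone s, p o ∈ (Set.univ : Set ℝ) := fun _ _ => trivial
  have := convexOn_exp.map_sum_le h₀ h₁ hmem
  rw [Finset.sum_insertNone, Finset.sum_insertNone] at this
  simpa [hw, hp, smul_eq_mul, Finset.mul_sum] using this

lemma exp_jensen_lt {ι : Type*} [DecidableEq ι] (s : Finset ι) (lam : ℝ) (hl : 0 < lam)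
    (hnl : lam * s.card < 1) (δ : ι → ℝ) (hne : ∃ j ∈ s, δ j ≠ 0) :
    Real.exp (lam * ∑ j ∈ s, δ j) < (1 - lam * s.card) + lam * ∑ j ∈ s, Real.exp (δ j) := by
  classical
  obtain ⟨j₀, hj₀, hδ⟩ := hne
  set w : Option ι → ℝ := fun o => Option.elim o (1 - lam * s.card) (fun _ => lam) with hw
  set p : Option ι → ℝ := fun o => Option.elim o 0 δ with hp
  have h₀ : ∀ o ∈ Finset.insertNone s, 0 < w o := by
    rintro (_|j) hj <;> simp [hw] <;> linarith
  have h₁ : ∑ o ∈ Finset.insertNone s, w o = 1 := by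
    rw [Finset.sum_insertNone]
    simp [hw, mul_comm]
  have hmem : ∀ o ∈ Finset.insertNone s, p o ∈ (Set.univ : Set ℝ) := fun _ _ => trivial
  have hpne : ∃ a ∈ Finset.insertNone s, ∃ b ∈ Finset.insertNone s, p a ≠ p b := by
    refine ⟨some j₀, by simp [hj₀], none, by simp, ?_⟩
    simpa [hp] using hδ
  have := strictConvexOn_exp.map_sum_lt h₀ h₁ hmem hpne
  rw [Finset.sum_insertNone, Finset.sum_insertNone] at this
  simpa [hw, hp, smul_eq_mul, Finset.mul_sum] using this

/-- Tangent-line lower bound for a row `log (1 + ∑ exp (y j))`. -/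
lemma row_le {ι : Type*} [DecidableEq ι] (s : Finset ι) (hs : 0 < s.card) (y₀ : ℝ) (y : ι → ℝ) :
    Real.log (1 + (s.card : ℝ) * Real.exp y₀)
      + (Real.exp y₀ / (1 + (s.card : ℝ) * Real.exp y₀)) * ∑ j ∈ s, (y j - y₀)
      ≤ Real.log (1 + ∑ j ∈ s, Real.exp (y j)) := by
  classical
  set n : ℝ := (s.card : ℝ) with hn
  have hn0 : (0:ℝ) < n := by rw [hn]; exact_mod_cast hs
  have hE : (0:ℝ) < Real.exp y₀ := Real.exp_pos _
  have hden : (0:ℝ) < 1 + n * Real.exp y₀ := by positivity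
  set lam : ℝ := Real.exp y₀ / (1 + n * Real.exp y₀) with hlam
  have hl : 0 < lam := by positivity
  have hnl : lam * n < 1 := by
    rw [hlam, div_mul_eq_mul_div, div_lt_one hden]
    linarith
  have key := exp_jensen_le s lam hl (by rwa [← hn]) (fun j => y j - y₀)
  have hsum : ∑ j ∈ s, Real.exp (y j - y₀) = (Real.exp y₀)⁻¹ * ∑ j ∈ s, Real.exp (y j) := by
    rw [Finset.mul_sum]
    refine Finset.sum_congr rfl fun j _ => ?_
    rw [Real.exp_sub]
    field_simp
  -- (1 + n e^{y₀}) * ((1 - lam n) + lam Σ e^{δ}) = 1 + Σ e^{y}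
  have hfact : (1 + n * Real.exp y₀) * ((1 - lam * n) + lam * ∑ j ∈ s, Real.exp (y j - y₀))
      = 1 + ∑ j ∈ s, Real.exp (y j) := by
    rw [hsum, hlam]
    field_simp
    ring
  have hpos2 : (0:ℝ) < (1 - lam * n) + lam * ∑ j ∈ s, Real.exp (y j - y₀) := by
    have : (0:ℝ) < ∑ j ∈ s, Real.exp (y j - y₀) :=
      Finset.sum_pos (fun j _ => Real.exp_pos _) (Finset.card_pos.mp hs)
    nlinarith
  have hlog : Real.log (1 + ∑ j ∈ s, Real.exp (y j))
      = Real.log (1 + n * Real.exp y₀)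
        + Real.log ((1 - lam * n) + lam * ∑ j ∈ s, Real.exp (y j - y₀)) := by
    rw [← hfact, Real.log_mul hden.ne' hpos2.ne']
  rw [hlog]
  have : lam * ∑ j ∈ s, (y j - y₀)
      ≤ Real.log ((1 - lam * n) + lam * ∑ j ∈ s, Real.exp (y j - y₀)) := by
    rw [← Real.log_exp (lam * ∑ j ∈ s, (y j - y₀))]
    exact Real.log_le_log (Real.exp_pos _) key
  linarith

lemma row_lt {ι : Type*} [DecidableEq ι] (s : Finset ι) (hs : 0 < s.card) (y₀ : ℝ) (y : ι → ℝ)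
    (hne : ∃ j ∈ s, y j ≠ y₀) :
    Real.log (1 + (s.card : ℝ) * Real.exp y₀)
      + (Real.exp y₀ / (1 + (s.card : ℝ) * Real.exp y₀)) * ∑ j ∈ s, (y j - y₀)
      < Real.log (1 + ∑ j ∈ s, Real.exp (y j)) := by
  classical
  set n : ℝ := (s.card : ℝ) with hn
  have hn0 : (0:ℝ) < n := by rw [hn]; exact_mod_cast hs
  have hE : (0:ℝ) < Real.exp y₀ := Real.exp_pos _
  have hden : (0:ℝ) < 1 + n * Real.exp y₀ := by positivity
  set lam : ℝ := Real.exp y₀ / (1 + n * Real.exp y₀) with hlam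
  have hl : 0 < lam := by positivity
  have hnl : lam * n < 1 := by
    rw [hlam, div_mul_eq_mul_div, div_lt_one hden]
    linarith
  have key := exp_jensen_lt s lam hl (by rwa [← hn]) (fun j => y j - y₀)
    (by obtain ⟨j, hj, hy⟩ := hne; exact ⟨j, hj, sub_ne_zero.mpr hy⟩)
  have hsum : ∑ j ∈ s, Real.exp (y j - y₀) = (Real.exp y₀)⁻¹ * ∑ j ∈ s, Real.exp (y j) := by
    rw [Finset.mul_sum]
    refine Finset.sum_congr rfl fun j _ => ?_
    rw [Real.exp_sub]
    field_simp
  have hfact : (1 + n * Real.exp y₀) * ((1 - lam * n) + lam * ∑ j ∈ s, Real.exp (y j - y₀))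
      = 1 + ∑ j ∈ s, Real.exp (y j) := by
    rw [hsum, hlam]
    field_simp
    ring
  have hpos2 : (0:ℝ) < (1 - lam * n) + lam * ∑ j ∈ s, Real.exp (y j - y₀) := by
    have : (0:ℝ) < ∑ j ∈ s, Real.exp (y j - y₀) :=
      Finset.sum_pos (fun j _ => Real.exp_pos _) (Finset.card_pos.mp hs)
    nlinarith
  have hlog : Real.log (1 + ∑ j ∈ s, Real.exp (y j))
      = Real.log (1 + n * Real.exp y₀)
        + Real.log ((1 - lam * n) + lam * ∑ j ∈ s, Real.exp (y j - y₀)) := by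
    rw [← hfact, Real.log_mul hden.ne' hpos2.ne']
  rw [hlog]
  have : lam * ∑ j ∈ s, (y j - y₀)
      < Real.log ((1 - lam * n) + lam * ∑ j ∈ s, Real.exp (y j - y₀)) := by
    rw [← Real.log_exp (lam * ∑ j ∈ s, (y j - y₀))]
    exact Real.log_lt_log (Real.exp_pos _) key
  linarith

def y0M (M : ℕ) (τ : ℝ) : ℝ := (-(M:ℝ)/((M:ℝ)-1))/τ

def lamM (M : ℕ) (τ : ℝ) : ℝ :=
  Real.exp (y0M M τ) / (1 + ((M:ℝ)-1) * Real.exp (y0M M τ))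

def Cval (M : ℕ) (τ : ℝ) : ℝ :=
  Real.log (1 + ((M:ℝ)-1) * Real.exp (y0M M τ))

variable {d M : ℕ} {τ : ℝ}

lemma Mfacts (hM : 1 < M) : (0:ℝ) < (M:ℝ) - 1 ∧ (0:ℝ) < (M:ℝ) := by
  have : (1:ℝ) < (M:ℝ) := by exact_mod_cast hM
  constructor <;> linarith

lemma lamM_pos (hM : 1 < M) : 0 < lamM M τ := by
  obtain ⟨h1, h2⟩ := Mfacts (M := M) hM
  unfold lamM
  have := Real.exp_pos (y0M M τ)
  positivity

lemma cardR (hM : 1 < M) (i : Fin M) :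
    (((univ : Finset (Fin M)).erase i).card : ℝ) = (M:ℝ) - 1 := by
  rw [card_erase_of_mem (mem_univ i), card_univ, Fintype.card_fin,
    Nat.cast_sub (by omega)]
  simp

lemma rowUV_le (hM : 1 < M) (hτ : 0 < τ)
    (U V : Fin M → EuclideanSpace ℝ (Fin d)) (i : Fin M) :
    Cval M τ + lamM M τ *
        ∑ j ∈ univ.erase i, ((⟪U i, V j⟫ - ⟪U i, V i⟫)/τ - y0M M τ)
      ≤ Real.log (1 + ∑ j ∈ univ.erase i,
          Real.exp ((⟪U i, V j⟫ - ⟪U i, V i⟫)/τ)) := by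
  have hc : (0:ℕ) < ((univ : Finset (Fin M)).erase i).card := by
    rw [card_erase_of_mem (mem_univ i), card_univ, Fintype.card_fin]; omega
  have := row_le ((univ : Finset (Fin M)).erase i) hc (y0M M τ)
    (fun j => (⟪U i, V j⟫ - ⟪U i, V i⟫)/τ)
  rwa [cardR hM i] at this

lemma rowUV_lt (hM : 1 < M) (hτ : 0 < τ)
    (U V : Fin M → EuclideanSpace ℝ (Fin d)) (i : Fin M)
    (hne : ∃ j ∈ univ.erase i, (⟪U i, V j⟫ - ⟪U i, V i⟫)/τ ≠ y0M M τ) :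
    Cval M τ + lamM M τ *
        ∑ j ∈ univ.erase i, ((⟪U i, V j⟫ - ⟪U i, V i⟫)/τ - y0M M τ)
      < Real.log (1 + ∑ j ∈ univ.erase i,
          Real.exp ((⟪U i, V j⟫ - ⟪U i, V i⟫)/τ)) := by
  have hc : (0:ℕ) < ((univ : Finset (Fin M)).erase i).card := by
    rw [card_erase_of_mem (mem_univ i), card_univ, Fintype.card_fin]; omega
  have := row_lt ((univ : Finset (Fin M)).erase i) hc (y0M M τ)
    (fun j => (⟪U i, V j⟫ - ⟪U i, V i⟫)/τ) hne
  rwa [cardR hM i] at this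

-- sum of the R quantities for one side
lemma sum_R (hM : 1 < M) (hτ : 0 < τ)
    (U V : Fin M → EuclideanSpace ℝ (Fin d)) :
    ∑ i, ∑ j ∈ univ.erase i, ((⟪U i, V j⟫ - ⟪U i, V i⟫)/τ - y0M M τ)
      = (⟪∑ i, U i, ∑ i, V i⟫ - (M:ℝ) * ∑ i, ⟪U i, V i⟫ + (M:ℝ)^2)/τ := by
  obtain ⟨hM1, hM0⟩ := Mfacts (M := M) hM
  have hy : ((M:ℝ)-1) * y0M M τ = -(M:ℝ)/τ := by
    unfold y0M
    field_simp
  have h1 : ∀ i : Fin M, ∑ j ∈ univ.erase i, ((⟪U i, V j⟫ - ⟪U i, V i⟫)/τ - y0M M τ)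
      = (∑ j ∈ univ.erase i, ⟪U i, V j⟫)/τ
        - ((M:ℝ)-1) * (⟪U i, V i⟫/τ) - ((M:ℝ)-1) * y0M M τ := by
    intro i
    have : ∀ j, ((⟪U i, V j⟫ - ⟪U i, V i⟫)/τ - y0M M τ)
        = ⟪U i, V j⟫/τ - (⟪U i, V i⟫/τ + y0M M τ) := by
      intro j; ring
    rw [Finset.sum_congr rfl (fun j _ => this j), Finset.sum_sub_distrib,
      Finset.sum_const, ← Finset.sum_div, nsmul_eq_mul, cardR hM i]
    ring
  have h2 : ∀ i : Fin M, ∑ j ∈ univ.erase i, ⟪U i, V j⟫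
      = (∑ j, ⟪U i, V j⟫) - ⟪U i, V i⟫ := by
    intro i
    exact Finset.sum_erase_eq_sub (mem_univ i)
  have h3 : ∑ i, ∑ j, ⟪U i, V j⟫ = ⟪∑ i, U i, ∑ i, V i⟫ := by
    rw [sum_inner]
    exact (Finset.sum_congr rfl fun i _ => (inner_sum _ _ _).symm)
  rw [Finset.sum_congr rfl (fun i _ => h1 i), Finset.sum_sub_distrib,
    Finset.sum_sub_distrib]
  rw [Finset.sum_const, card_univ, Fintype.card_fin, nsmul_eq_mul]
  rw [← Finset.sum_div, Finset.sum_congr rfl (fun i _ => h2 i),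
    Finset.sum_sub_distrib, h3]
  rw [← Finset.mul_sum, ← Finset.sum_div, hy]
  field_simp
  ring

lemma Lnce_eq (hM : 1 < M)
    (U V : Fin M → EuclideanSpace ℝ (Fin d)) (τ : ℝ) :
    Lnce d M τ U V = (1 / (M : ℝ)) * ∑ i, Real.log
      (1 + ∑ j ∈ univ.erase i, Real.exp ((⟪U i, V j⟫ - ⟪U i, V i⟫) / τ)) := by
  haveI : Nonempty (Fin M) := ⟨⟨0, by omega⟩⟩
  unfold Lnce
  congr 1
  refine Finset.sum_congr rfl fun i _ => ?_
  have hS : (0:ℝ) < ∑ j, Real.exp (⟪U i, V j⟫ / τ) :=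
    Finset.sum_pos (fun j _ => Real.exp_pos _) univ_nonempty
  rw [Real.log_div (Real.exp_pos _).ne' hS.ne', Real.log_exp, neg_sub]
  have key : 1 + ∑ j ∈ univ.erase i, Real.exp ((⟪U i, V j⟫ - ⟪U i, V i⟫) / τ)
      = (∑ j, Real.exp (⟪U i, V j⟫ / τ)) * Real.exp (-(⟪U i, V i⟫ / τ)) := by
    rw [Finset.sum_mul]
    have : ∀ j, Real.exp (⟪U i, V j⟫ / τ) * Real.exp (-(⟪U i, V i⟫ / τ))
        = Real.exp ((⟪U i, V j⟫ - ⟪U i, V i⟫) / τ) := by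
      intro j
      rw [← Real.exp_add]
      congr 1
      ring
    simp_rw [this]
    rw [← Finset.sum_erase_add _ _ (mem_univ i)]
    rw [show (⟪U i, V i⟫ - ⟪U i, V i⟫ : ℝ) / τ = 0 by ring, Real.exp_zero]
    ring
  rw [key, Real.log_mul hS.ne' (Real.exp_pos _).ne', Real.log_exp]
  ring

lemma main_bound (hM : 1 < M) (hτ : 0 < τ)
    (U V : Fin M → EuclideanSpace ℝ (Fin d))
    (hU : ∀ i, ‖U i‖ = 1) (hV : ∀ i, ‖V i‖ = 1) :
    Cval M τ ≤ LnceSym d M τ U V ∧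
      (LnceSym d M τ U V = Cval M τ →
        (∀ i, U i = V i) ∧ ∀ i j, i ≠ j → ⟪U i, U j⟫ = -1 / ((M : ℝ) - 1)) := by
  classical
  obtain ⟨hM1, hM0⟩ := Mfacts (M := M) hM
  have hlam := lamM_pos (τ := τ) hM
  set a := ∑ i, U i with ha
  set b := ∑ i, V i with hb
  set σ : ℝ := ∑ i, ⟪U i, V i⟫ with hσ
  set D : ℝ := ∑ i, ‖U i - V i‖^2 with hD
  set rowU : Fin M → ℝ := fun i => Real.log
      (1 + ∑ j ∈ univ.erase i, Real.exp ((⟪U i, V j⟫ - ⟪U i, V i⟫) / τ)) with hrowU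
  set rowV : Fin M → ℝ := fun i => Real.log
      (1 + ∑ j ∈ univ.erase i, Real.exp ((⟪V i, U j⟫ - ⟪V i, U i⟫) / τ)) with hrowV
  set RU : Fin M → ℝ := fun i =>
      ∑ j ∈ univ.erase i, ((⟪U i, V j⟫ - ⟪U i, V i⟫)/τ - y0M M τ) with hRU
  set RV : Fin M → ℝ := fun i =>
      ∑ j ∈ univ.erase i, ((⟪V i, U j⟫ - ⟪V i, U i⟫)/τ - y0M M τ) with hRV
  -- LnceSym in terms of rows
  have hLsym : LnceSym d M τ U V = (1/(2*(M:ℝ))) * (∑ i, rowU i + ∑ i, rowV i) := by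
    unfold LnceSym
    rw [Lnce_eq hM U V τ, Lnce_eq hM V U τ]
    simp only [hrowU, hrowV]
    ring
  -- row bounds
  have hrowleU : ∀ i, Cval M τ + lamM M τ * RU i ≤ rowU i := fun i =>
    rowUV_le hM hτ U V i
  have hrowleV : ∀ i, Cval M τ + lamM M τ * RV i ≤ rowV i := fun i =>
    rowUV_le hM hτ V U i
  -- sum identities
  have hsumRU : ∑ i, RU i = (⟪a, b⟫ - (M:ℝ) * σ + (M:ℝ)^2)/τ := sum_R hM hτ U V
  have hsumRV : ∑ i, RV i = (⟪b, a⟫ - (M:ℝ) * (∑ i, ⟪V i, U i⟫) + (M:ℝ)^2)/τ :=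
    sum_R hM hτ V U
  have hσ' : (∑ i, ⟪V i, U i⟫) = σ := by
    rw [hσ]
    exact Finset.sum_congr rfl fun i _ => real_inner_comm _ _
  have hba : ⟪b, a⟫ = ⟪a, b⟫ := real_inner_comm _ _
  have hT : ∑ i, RU i + ∑ i, RV i = (2*⟪a, b⟫ + (M:ℝ)*D)/τ := by
    rw [hsumRU, hsumRV, hσ', hba]
    have hDs : D = 2*(M:ℝ) - 2*σ := by
      have h1 : ∀ i : Fin M, ‖U i - V i‖^2 = 2 - 2*⟪U i, V i⟫ := by
        intro i
        rw [norm_sub_sq_real, hU, hV]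
        ring
      rw [hD, Finset.sum_congr rfl (fun i _ => h1 i), Finset.sum_sub_distrib,
        Finset.sum_const, card_univ, Fintype.card_fin, nsmul_eq_mul, ← Finset.mul_sum, ← hσ]
      ring
    rw [hDs]
    field_simp
    ring
  -- geometry
  have hgeo : -((M:ℝ) * D)/4 ≤ ⟪a, b⟫ := by
    have e1 : ‖a+b‖^2 = ‖a‖^2 + 2*⟪a,b⟫ + ‖b‖^2 := norm_add_sq_real a b
    have e2 : ‖a-b‖^2 = ‖a‖^2 - 2*⟪a,b⟫ + ‖b‖^2 := norm_sub_sq_real a b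
    have e3 : (0:ℝ) ≤ ‖a+b‖^2 := sq_nonneg _
    have e4 : ‖a - b‖^2 ≤ (M:ℝ) * D := by
      have hab : a - b = ∑ i, (U i - V i) := by
        rw [ha, hb, Finset.sum_sub_distrib]
      have h5 : ‖a - b‖ ≤ ∑ i, ‖U i - V i‖ := by
        rw [hab]; exact norm_sum_le _ _
      have h6 : (∑ i, ‖U i - V i‖)^2 ≤ (M:ℝ) * D := by
        have := sq_sum_le_card_mul_sum_sq (s := (univ : Finset (Fin M)))
          (f := fun i => ‖U i - V i‖)
        simpa [hD, card_univ] using this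
      calc ‖a - b‖^2 ≤ (∑ i, ‖U i - V i‖)^2 := by
            apply pow_le_pow_left₀ (norm_nonneg _) h5
        _ ≤ (M:ℝ) * D := h6
    nlinarith
  have hDnn : 0 ≤ D := Finset.sum_nonneg fun i _ => sq_nonneg _
  have hTge : ((M:ℝ)*D/2)/τ ≤ ∑ i, RU i + ∑ i, RV i := by
    rw [hT]
    gcongr
    linarith [hgeo]
  -- sums of per-row lower bounds
  have e1 : ∑ i : Fin M, (Cval M τ + lamM M τ * RU i)
      = (M:ℝ)*Cval M τ + lamM M τ * ∑ i, RU i := by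
    rw [Finset.sum_add_distrib, Finset.sum_const, card_univ, Fintype.card_fin,
      nsmul_eq_mul, ← Finset.mul_sum]
  have e2 : ∑ i : Fin M, (Cval M τ + lamM M τ * RV i)
      = (M:ℝ)*Cval M τ + lamM M τ * ∑ i, RV i := by
    rw [Finset.sum_add_distrib, Finset.sum_const, card_univ, Fintype.card_fin,
      nsmul_eq_mul, ← Finset.mul_sum]
  have hsum_ge : 2*(M:ℝ)*Cval M τ + lamM M τ * (∑ i, RU i + ∑ i, RV i)
      ≤ ∑ i, rowU i + ∑ i, rowV i := by
    have h1 : ∑ i : Fin M, (Cval M τ + lamM M τ * RU i) ≤ ∑ i, rowU i :=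
      Finset.sum_le_sum (fun i _ => hrowleU i)
    have h2 : ∑ i : Fin M, (Cval M τ + lamM M τ * RV i) ≤ ∑ i, rowV i :=
      Finset.sum_le_sum (fun i _ => hrowleV i)
    rw [e1] at h1
    rw [e2] at h2
    linarith
  have hrows_ge : 2*(M:ℝ)*Cval M τ + lamM M τ * (((M:ℝ)*D/2)/τ)
      ≤ ∑ i, rowU i + ∑ i, rowV i := by
    have := mul_le_mul_of_nonneg_left hTge hlam.le
    linarith
  have h2M : (0:ℝ) < 2*(M:ℝ) := by linarith
  have hLge : Cval M τ + (lamM M τ * (((M:ℝ)*D/2)/τ))/(2*(M:ℝ))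
      ≤ LnceSym d M τ U V := by
    rw [hLsym]
    have step : Cval M τ + (lamM M τ * (((M:ℝ)*D/2)/τ))/(2*(M:ℝ))
        = (1/(2*(M:ℝ))) * (2*(M:ℝ)*Cval M τ + lamM M τ * (((M:ℝ)*D/2)/τ)) := by
      field_simp
    rw [step]
    have hpos : (0:ℝ) ≤ 1/(2*(M:ℝ)) := by positivity
    exact mul_le_mul_of_nonneg_left hrows_ge hpos
  have hDnn' : (0:ℝ) ≤ (lamM M τ * (((M:ℝ)*D/2)/τ))/(2*(M:ℝ)) := by positivity
  constructor
  · linarith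
  · intro heq
    have hD0 : D = 0 := by
      have hle : (lamM M τ * (((M:ℝ)*D/2)/τ))/(2*(M:ℝ)) ≤ 0 := by
        rw [heq] at hLge
        linarith
      have hcoeff : (0:ℝ) < lamM M τ / (4*τ) := by positivity
      have hXeq : (lamM M τ * (((M:ℝ)*D/2)/τ))/(2*(M:ℝ)) = (lamM M τ / (4*τ)) * D := by
        field_simp
        ring
      rcases eq_or_lt_of_le hDnn with h|h
      · exact h.symm
      · exfalso
        have := mul_pos hcoeff h
        rw [← hXeq] at this
        linarith
    have hUV : ∀ i, U i = V i := by
      intro i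
      have h0 : ∀ i ∈ (univ : Finset (Fin M)), ‖U i - V i‖^2 = 0 :=
        (Finset.sum_eq_zero_iff_of_nonneg (fun i _ => sq_nonneg _)).mp (hD ▸ hD0)
      have := h0 i (mem_univ i)
      have : ‖U i - V i‖ = 0 := by
        nlinarith [norm_nonneg (U i - V i)]
      rw [norm_eq_zero, sub_eq_zero] at this
      exact this
    refine ⟨hUV, ?_⟩
    have hab' : b = a := by
      rw [ha, hb]
      exact (Finset.sum_congr rfl fun i _ => (hUV i).symm)
    have hTval : ∑ i, RU i + ∑ i, RV i = (2*‖a‖^2)/τ := by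
      rw [hT, hD0, hab', real_inner_self_eq_norm_sq]
      ring
    have hrows_eq : ∑ i, rowU i + ∑ i, rowV i = 2*(M:ℝ)*Cval M τ := by
      rw [hLsym] at heq
      have hcc : (2*(M:ℝ)) * (1/(2*(M:ℝ))) = 1 := by field_simp
      calc ∑ i, rowU i + ∑ i, rowV i
          = (2*(M:ℝ)) * (1/(2*(M:ℝ))) * (∑ i, rowU i + ∑ i, rowV i) := by
            rw [hcc, one_mul]
        _ = (2*(M:ℝ)) * ((1/(2*(M:ℝ))) * (∑ i, rowU i + ∑ i, rowV i)) := by ring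
        _ = 2*(M:ℝ)*Cval M τ := by rw [heq]
    have hT0 : ∑ i, RU i + ∑ i, RV i = 0 := by
      have hnn : 0 ≤ ∑ i, RU i + ∑ i, RV i := by
        rw [hTval]; positivity
      have hle : lamM M τ * (∑ i, RU i + ∑ i, RV i) ≤ 0 := by linarith
      nlinarith
    -- per-row equality
    have hkey : ∑ i, ((rowU i - (Cval M τ + lamM M τ * RU i))
        + (rowV i - (Cval M τ + lamM M τ * RV i))) = 0 := by
      rw [Finset.sum_add_distrib, Finset.sum_sub_distrib, Finset.sum_sub_distrib, e1, e2]
      have : lamM M τ * (∑ i, RU i) + lamM M τ * (∑ i, RV i) = 0 := by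
        rw [← mul_add, hT0, mul_zero]
      linarith
    have hzero : ∀ i : Fin M,
        (rowU i - (Cval M τ + lamM M τ * RU i))
          + (rowV i - (Cval M τ + lamM M τ * RV i)) = 0 := by
      intro i
      have hnn : ∀ i ∈ (univ : Finset (Fin M)),
          0 ≤ (rowU i - (Cval M τ + lamM M τ * RU i))
            + (rowV i - (Cval M τ + lamM M τ * RV i)) := by
        intro i _
        have := hrowleU i
        have := hrowleV i
        linarith
      exact (Finset.sum_eq_zero_iff_of_nonneg hnn).mp hkey i (mem_univ i)
    have hys : ∀ i, ∀ j ∈ univ.erase i, (⟪U i, V j⟫ - ⟪U i, V i⟫)/τ = y0M M τ := by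
      intro i
      by_contra hcon
      push_neg at hcon
      obtain ⟨j, hj, hne⟩ := hcon
      have hlt := rowUV_lt hM hτ U V i ⟨j, hj, hne⟩
      have h1 := hrowleV i
      have h2 := hzero i
      simp only [hrowU, hrowV, hRU, hRV] at h1 h2
      linarith
    intro i j hij
    have hj : j ∈ univ.erase i := mem_erase.mpr ⟨Ne.symm hij, mem_univ j⟩
    have hy := hys i j hj
    have hVj : V j = U j := (hUV j).symm
    have hii : ⟪U i, V i⟫ = (1:ℝ) := by
      rw [← hUV i, real_inner_self_eq_norm_sq, hU i, one_pow]
    rw [hVj, hii] at hy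
    unfold y0M at hy
    have hM1' : ((M:ℝ)-1) ≠ 0 := hM1.ne'
    have h1 : ⟪U i, U j⟫ - 1 = -(M:ℝ)/((M:ℝ)-1) := by
      have hinj : Function.Injective (fun x : ℝ => x / τ) := fun x y hxy => by
        have := congrArg (fun z => z * τ) hxy
        simpa [div_mul_cancel₀, hτ.ne'] using this
      exact hinj hy
    have h2 : ⟪U i, U j⟫ = 1 + -(M:ℝ)/((M:ℝ)-1) := by linarith
    rw [h2]
    field_simp
    ring

lemma value_simplex (hM : 1 < M) (hτ : 0 < τ)
    (U : Fin M → EuclideanSpace ℝ (Fin d)) (hU : ∀ i, ‖U i‖ = 1)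
    (hsim : ∀ i j, i ≠ j → ⟪U i, U j⟫ = -1 / ((M:ℝ) - 1)) :
    Lnce d M τ U U = Cval M τ := by
  obtain ⟨hM1, hM0⟩ := Mfacts (M := M) hM
  rw [Lnce_eq hM U U τ]
  have hrow : ∀ i : Fin M, Real.log
      (1 + ∑ j ∈ univ.erase i, Real.exp ((⟪U i, U j⟫ - ⟪U i, U i⟫)/τ)) = Cval M τ := by
    intro i
    have hterm : ∀ j ∈ univ.erase i,
        Real.exp ((⟪U i, U j⟫ - ⟪U i, U i⟫)/τ) = Real.exp (y0M M τ) := by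
      intro j hj
      have hji : j ≠ i := (mem_erase.mp hj).1
      rw [hsim i j (Ne.symm hji), real_inner_self_eq_norm_sq, hU i, one_pow]
      congr 1
      unfold y0M
      field_simp
      ring
    rw [Finset.sum_congr rfl hterm, Finset.sum_const, nsmul_eq_mul, cardR hM i]
    rfl
  rw [Finset.sum_congr rfl (fun i _ => hrow i), Finset.sum_const, card_univ,
    Fintype.card_fin, nsmul_eq_mul]
  field_simp

theorem stmt_3 (d M : ℕ) (hM : 1 < M) (hMd : M ≤ d + 1) (τ : ℝ) (hτ : 0 < τ) :
    ∀ U V : Fin M → EuclideanSpace ℝ (Fin d),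
      (∀ i, ‖U i‖ = 1) → (∀ i, ‖V i‖ = 1) →
      ((∀ U' V' : Fin M → EuclideanSpace ℝ (Fin d),
          (∀ i, ‖U' i‖ = 1) → (∀ i, ‖V' i‖ = 1) →
          LnceSym d M τ U V ≤ LnceSym d M τ U' V') ↔
        ((∀ i, U i = V i) ∧
          ∀ i j, i ≠ j → ⟪U i, U j⟫ = -1 / ((M : ℝ) - 1))) := by
  intro U V hU hV
  constructor
  · intro hmin
    obtain ⟨W, hWnorm, hWsim⟩ := simplex_exists d M hM hMd
    have hWval : LnceSym d M τ W W = Cval M τ := by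
      unfold LnceSym
      rw [value_simplex hM hτ W hWnorm hWsim]
      ring
    have hle : LnceSym d M τ U V ≤ Cval M τ := hWval ▸ hmin W W hWnorm hWnorm
    have hge := (main_bound hM hτ U V hU hV).1
    exact (main_bound hM hτ U V hU hV).2 (le_antisymm hle hge)
  · rintro ⟨h1, h2⟩
    intro U' V' hU' hV'
    have hval : LnceSym d M τ U V = Cval M τ := by
      have hVU : V = U := funext fun i => (h1 i).symm
      rw [hVU]
      unfold LnceSym
      rw [value_simplex hM hτ U hU h2]
      ring
    rw [hval]
    exact (main_bound hM hτ U' V' hU' hV').1
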